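/- Moment matching of the Lanczos process: Let A be an n×n Hermitian complex matrix and let (V_k, T_k, β_k, v_{k+1}) be a Lanczos relation of length k for A with starting vector v. Then for every integer j with 0 ≤ j ≤ 2k−1, v* A^j v = e_1* T_k^j e_1. -/

import Mathlib

open Matrix

/-- A Lanczos relation of length `k` for an `n × n` Hermitian matrix `A` over `𝕜`
with starting unit vector `v`: orthonormal columns `V` with first column `v`, a real
symmetric tridiagonal matrix `T` with positive subdiagonal, `β > 0` and a unit vector
`vNext` orthogonal to the columns of `V`, such that `A V = V T + β vNext eₖ*`. -/
structure LanczosRelation (𝕜 : Type) [RCLike 𝕜] (n k : ℕ)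
    (A : Matrix (Fin n) (Fin n) 𝕜) (v : Fin n → 𝕜) where
  kpos : 0 < k
  V : Matrix (Fin n) (Fin k) 𝕜
  T : Matrix (Fin k) (Fin k) ℝ
  β : ℝ
  vNext : Fin n → 𝕜
  orthonormal : Vᴴ * V = 1
  firstCol : (fun i => V i ⟨0, kpos⟩) = v
  symm : T.IsHermitian
  tridiag : ∀ i j : Fin k, (i : ℕ) + 1 < (j : ℕ) → T i j = 0
  subdiag_pos : ∀ (i : ℕ) (h : i + 1 < k), 0 < T ⟨i + 1, h⟩ ⟨i, by omega⟩
  β_pos : 0 < β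
  vNext_unit : star vNext ⬝ᵥ vNext = 1
  vNext_orth : Vᴴ *ᵥ vNext = 0
  relation : A * V = V * T.map (algebraMap ℝ 𝕜) +
      (algebraMap ℝ 𝕜 β) • vecMulVec vNext (Pi.single ⟨k - 1, by omega⟩ 1)

/-- **Moment matching of the Lanczos process**: for a Lanczos relation of length `k` for
the Hermitian matrix `A` with starting vector `v`, the moments satisfy
`v* Aʲ v = e₁* T_kʲ e₁` for all `0 ≤ j ≤ 2k - 1`. -/
theorem lanczos_moment_matching
    {n k : ℕ} {A : Matrix (Fin n) (Fin n) ℂ} (hA : A.IsHermitian)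
    {v : Fin n → ℂ}
    (L : LanczosRelation ℂ n k A v) :
    ∀ j : ℕ, j ≤ 2 * k - 1 →
      star v ⬝ᵥ (A ^ j) *ᵥ v
        = ((Pi.single (⟨0, L.kpos⟩ : Fin k) 1 ⬝ᵥ (L.T ^ j) *ᵥ
            Pi.single (⟨0, L.kpos⟩ : Fin k) 1 : ℝ) : ℂ) := by
  classical
  have hk := L.kpos
  set e0 : Fin k := ⟨0, L.kpos⟩ with he0
  set ek : Fin k := ⟨k - 1, by omega⟩ with hek
  -- symmetry of T and its powers
  have hTsym : ∀ i j : Fin k, L.T i j = L.T j i := fun i j => by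
    have := L.symm.apply i j; simpa using this.symm
  have hTsymP : ∀ (m : ℕ) (i j : Fin k), (L.T ^ m) i j = (L.T ^ m) j i := fun m i j => by
    have := (L.symm.pow m).apply i j; simpa using this.symm
  -- band structure of powers
  have band : ∀ (p : ℕ) (i j : Fin k), (j : ℕ) + p < (i : ℕ) → (L.T ^ p) i j = 0 := by
    intro p
    induction p with
    | zero =>
      intro i j h
      simp only [pow_zero]
      exact Matrix.one_apply_ne (Fin.ne_of_val_ne (by omega))
    | succ p ih =>
      intro i j h
      rw [pow_succ, Matrix.mul_apply]
      apply Finset.sum_eq_zero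
      intro l _
      by_cases hl : (l : ℕ) + p < (i : ℕ)
      · rw [ih i l hl, zero_mul]
      · have hlj : (j : ℕ) + 1 < (l : ℕ) := by omega
        rw [hTsym l j, L.tridiag j l hlj, mul_zero]
  -- Krylov subspace property
  have krylov : ∀ p : ℕ, p < k →
      (A ^ p) *ᵥ v = L.V *ᵥ (fun i => (((L.T ^ p) i e0 : ℝ) : ℂ)) := by
    intro p
    induction p with
    | zero =>
      intro _
      have hv : ∀ i, L.V i e0 = v i := fun i => congrFun L.firstCol i
      simp only [pow_zero, Matrix.one_mulVec]
      ext i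
      rw [← hv i]
      simp [Matrix.mulVec, dotProduct, Matrix.one_apply,
        apply_ite ((↑) : ℝ → ℂ)]
    | succ p ih =>
      intro hp
      have hp' : p < k := by omega
      have h2 : Matrix.vecMulVec L.vNext (Pi.single (⟨k - 1, by omega⟩ : Fin k) (1:ℂ)) *ᵥ
          (fun i => (((L.T ^ p) i e0 : ℝ) : ℂ)) = 0 := by
        have hzero : (L.T ^ p) ek e0 = 0 := band p ek e0 (by simp [he0, hek]; omega)
        ext i
        simp [Matrix.mulVec, dotProduct, Matrix.vecMulVec_apply, Pi.single_apply,
          mul_ite, hek, hzero]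
        exact Or.inr hzero
      rw [pow_succ', ← Matrix.mulVec_mulVec, ih hp', Matrix.mulVec_mulVec, L.relation,
        Matrix.add_mulVec, Matrix.smul_mulVec, h2, smul_zero, add_zero,
        ← Matrix.mulVec_mulVec]
      funext i
      rw [pow_succ']
      simp only [Matrix.mulVec, dotProduct, Matrix.mul_apply, Matrix.map_apply]
      push_cast
      rfl
  intro j hj
  -- simplify the right-hand side
  have hrhs : ∀ m : ℕ, (Pi.single e0 1 ⬝ᵥ (L.T ^ m) *ᵥ Pi.single e0 1 : ℝ)
      = (L.T ^ m) e0 e0 := by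
    intro m
    simp [Matrix.mulVec_single, single_dotProduct]
  rcases Nat.eq_zero_or_pos j with rfl | hjpos
  · rw [hrhs]
    simp only [pow_zero, Matrix.one_mulVec, Matrix.one_apply_eq]
    have h := congrArg (fun M => M e0 e0) L.orthonormal
    simp only [Matrix.mul_apply, Matrix.conjTranspose_apply, Matrix.one_apply_eq] at h
    rw [← L.firstCol]
    simpa [dotProduct] using h
  · obtain ⟨p, q, hp, hq, hj'⟩ : ∃ p q, p < k ∧ q < k ∧ j = p + 1 + q := by
      rcases lt_or_ge (j - 1) k with h | h
      · exact ⟨j - 1, 0, by omega, hk, by omega⟩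
      · exact ⟨k - 1, j - k, by omega, by omega, by omega⟩
    subst hj'
    set x : Fin k → ℂ := fun i => (((L.T ^ p) i e0 : ℝ) : ℂ) with hx
    set y : Fin k → ℂ := fun i => (((L.T ^ q) i e0 : ℝ) : ℂ) with hy
    have hAp : (A ^ p)ᴴ = A ^ p := hA.pow p
    have step1 : star v ⬝ᵥ (A ^ (p + 1 + q)) *ᵥ v
        = star (L.V *ᵥ x) ⬝ᵥ ((A * L.V) *ᵥ y) := by
      have : A ^ (p + 1 + q) = A ^ p * A * A ^ q := by
        rw [pow_add, pow_succ]
      rw [this, ← Matrix.mulVec_mulVec, krylov q hq, Matrix.mulVec_mulVec,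
        Matrix.mul_assoc, ← Matrix.mulVec_mulVec, Matrix.dotProduct_mulVec]
      rw [show star v ᵥ* (A ^ p) = star ((A ^ p) *ᵥ v) by
        rw [Matrix.star_mulVec, hAp]]
      rw [krylov p hp]
    have step2 : star (L.V *ᵥ x) ⬝ᵥ ((A * L.V) *ᵥ y)
        = star x ⬝ᵥ ((L.T.map (algebraMap ℝ ℂ)) *ᵥ y) := by
      rw [L.relation, Matrix.add_mulVec, dotProduct_add, Matrix.smul_mulVec,
        dotProduct_smul]
      have h1 : Matrix.vecMulVec L.vNext (Pi.single (⟨k - 1, by omega⟩ : Fin k) (1:ℂ)) *ᵥ y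
          = (y ek) • L.vNext := by
        ext i
        simp [Matrix.mulVec, dotProduct, Matrix.vecMulVec_apply, Pi.single_apply,
          mul_ite, hek, mul_comm]
      rw [h1]
      have h2 : star (L.V *ᵥ x) ⬝ᵥ ((y ek) • L.vNext) = 0 := by
        rw [dotProduct_smul, Matrix.star_mulVec, ← Matrix.dotProduct_mulVec,
          L.vNext_orth, dotProduct_zero, smul_zero]
      rw [h2, smul_zero, add_zero, Matrix.star_mulVec, ← Matrix.dotProduct_mulVec,
        Matrix.mulVec_mulVec, ← Matrix.mul_assoc, L.orthonormal, Matrix.one_mul]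
    have step3 : star x ⬝ᵥ ((L.T.map (algebraMap ℝ ℂ)) *ᵥ y)
        = (((L.T ^ (p + 1 + q)) e0 e0 : ℝ) : ℂ) := by
      have hsum : (L.T ^ (p + 1 + q)) e0 e0
          = ∑ i, ∑ l, (L.T ^ p) i e0 * (L.T i l * (L.T ^ q) l e0) := by
        have hpow : L.T ^ (p + 1 + q) = L.T ^ p * (L.T * L.T ^ q) := by
          rw [show p + 1 + q = p + (1 + q) by omega, pow_add, pow_add, pow_one]
        rw [hpow, Matrix.mul_apply]
        refine Finset.sum_congr rfl fun i _ => ?_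
        rw [Matrix.mul_apply, Finset.mul_sum, hTsymP p e0 i]
      rw [hsum]
      push_cast
      simp only [dotProduct, Matrix.mulVec, Matrix.map_apply, hx, hy,
        Pi.star_apply, RCLike.star_def]
      refine Finset.sum_congr rfl fun i _ => ?_
      rw [Finset.mul_sum]
      refine Finset.sum_congr rfl fun l _ => ?_
      simp [Complex.conj_ofReal]
    rw [step1, step2, step3, hrhs]
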